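/- Let ρ^(B):[0,∞)×ℝ→ℝ be defined by: for 0 < t ≤ 1, ρ^(B)(t,x) = (x+1)/(2t) if x ∈ [−1, 2t−1], ρ^(B)(t,x) = 1 if x ∈ (2t−1, t], and 0 otherwise; for t > 1, ρ^(B)(t,x) = (x+1)/(2t) if x ∈ [−1, 2√t − 1] and 0 otherwise; and ρ^(B)(0,·) = 1_{[−1,0]}. Fix T > 0. Then for every measurable function f:[0,T]×ℝ→ℝ with f(t,x) = 0 for almost every (t,x) with x > 0, one has ‖f − ρ^(B)‖_{L¹([0,T]×ℝ)} ≥ ∫_0^T ∫_0^∞ ρ^(B)(t,x) dx dt > 0. In particular, no sequence of functions vanishing almost everywhere on [0,T]×(0,∞) converges to ρ^(B) in L¹([0,T]×ℝ). -/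

import Mathlib

open MeasureTheory Set Filter

/-- The explicit entropy admissible solution of Example B. -/
noncomputable def rhoB (t x : ℝ) : ℝ :=
  if t = 0 then indicator (Icc (-1 : ℝ) 0) (fun _ => (1 : ℝ)) x
  else if t ≤ 1 then
    if x ∈ Icc (-1 : ℝ) (2*t - 1) then (x + 1) / (2*t)
    else if x ∈ Ioc (2*t - 1) t then 1
    else 0
  else
    if x ∈ Icc (-1 : ℝ) (2 * Real.sqrt t - 1) then (x + 1) / (2*t)
    else 0

lemma rhoB_nonneg (t x : ℝ) : 0 ≤ rhoB t x := by
  unfold rhoB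
  split_ifs with h1 h2 h3 h4 h5 <;>
    try norm_num
  · exact indicator_nonneg (fun _ _ => zero_le_one) x
  · rw [mem_Icc] at h3
    have ht : 0 < t := lt_of_le_of_ne (by linarith) (Ne.symm h1)
    have hx : (0:ℝ) ≤ x + 1 := by linarith
    positivity
  · rw [mem_Icc] at h5
    have ht : (0:ℝ) < t := by linarith [lt_of_not_ge h2]
    have hx : (0:ℝ) ≤ x + 1 := by linarith
    positivity

lemma rhoB_le_one (t x : ℝ) : rhoB t x ≤ 1 := by
  unfold rhoB
  split_ifs with h1 h2 h3 h4 h5 <;>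
    try norm_num
  · exact indicator_le_self' (fun _ _ => zero_le_one) x |>.trans le_rfl
  · rw [mem_Icc] at h3
    have ht : 0 < t := lt_of_le_of_ne (by linarith) (Ne.symm h1)
    rw [div_le_one (by linarith)]
    linarith
  · rw [mem_Icc] at h5
    have ht1 : (1:ℝ) < t := lt_of_not_ge h2
    have ht : (0:ℝ) < t := by linarith
    have hs : Real.sqrt t ≤ t := by
      nlinarith [Real.sq_sqrt ht.le, Real.sqrt_nonneg t]
    rw [div_le_one (by linarith)]
    linarith

lemma measurable_rhoB : Measurable (Function.uncurry rhoB) := by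
  have : Function.uncurry rhoB = fun p : ℝ × ℝ =>
    if p.1 = 0 then indicator (Icc (-1 : ℝ) 0) (fun _ => (1 : ℝ)) p.2
    else if p.1 ≤ 1 then
      if p.2 ∈ Icc (-1 : ℝ) (2*p.1 - 1) then (p.2 + 1) / (2*p.1)
      else if p.2 ∈ Ioc (2*p.1 - 1) p.1 then 1
      else 0
    else
      if p.2 ∈ Icc (-1 : ℝ) (2 * Real.sqrt p.1 - 1) then (p.2 + 1) / (2*p.1)
      else 0 := rfl
  rw [this]
  simp only [mem_Icc, mem_Ioc, indicator_apply]
  apply Measurable.ite (measurableSet_eq_fun measurable_fst measurable_const)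
  · apply Measurable.ite
    · exact (measurableSet_le measurable_const measurable_snd).inter
        (measurableSet_le measurable_snd measurable_const)
    all_goals exact measurable_const
  · apply Measurable.ite (measurableSet_le measurable_fst measurable_const)
    · apply Measurable.ite
      · exact (measurableSet_le measurable_const measurable_snd).inter
          (measurableSet_le measurable_snd (by fun_prop))
      · exact (measurable_snd.add measurable_const).div (measurable_const.mul measurable_fst)
      · apply Measurable.ite
        · exact (measurableSet_lt (by fun_prop) measurable_snd).inter
            (measurableSet_le measurable_snd measurable_fst)
        all_goals exact measurable_const
    · apply Measurable.ite
      · exact (measurableSet_le measurable_const measurable_snd).inter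
          (measurableSet_le measurable_snd (by fun_prop))
      · exact (measurable_snd.add measurable_const).div (measurable_const.mul measurable_fst)
      · exact measurable_const

lemma rhoB_support {T t x : ℝ} (hT : 0 < T) (ht : t ∈ Icc (0:ℝ) T)
    (hx : x ∉ Icc (-1 : ℝ) (2 * Real.sqrt T + T + 1)) : rhoB t x = 0 := by
  obtain ⟨ht0, htT⟩ := ht
  have hsT : (0:ℝ) ≤ Real.sqrt T := Real.sqrt_nonneg T
  rw [mem_Icc, not_and_or, not_le, not_le] at hx
  unfold rhoB
  split_ifs with h1 h2 h3 h4 h5 <;> try rfl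
  · rw [indicator_apply_eq_zero]
    intro hmem
    rw [mem_Icc] at hmem
    rcases hx with hx | hx <;> [linarith [hmem.1]; linarith [hmem.2]]
  · exfalso
    rw [mem_Icc] at h3
    rcases hx with hx | hx <;> [linarith [h3.1]; linarith [h3.2]]
  · exfalso
    rw [mem_Ioc] at h4
    have ht0' : 0 < t := lt_of_le_of_ne ht0 (Ne.symm h1)
    rcases hx with hx | hx <;> [linarith [h4.1]; linarith [h4.2]]
  · exfalso
    rw [mem_Icc] at h5
    have hst : Real.sqrt t ≤ Real.sqrt T := Real.sqrt_le_sqrt htT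
    rcases hx with hx | hx <;> [linarith [h5.1]; linarith [h5.2]]

lemma rhoB_eq_one {T t x : ℝ} (hT : 0 < T)
    (ht : t ∈ Icc (min T 1 / 2 / 2) (min T 1 / 2)) (hx : x ∈ Ioc (0:ℝ) (min T 1 / 2 / 2)) :
    rhoB t x = 1 := by
  set s := min T 1 / 2 with hs
  have hs0 : 0 < s := by positivity
  have hs1 : s ≤ 1/2 := by
    rw [hs]; have := min_le_right T 1; linarith
  obtain ⟨ht1, ht2⟩ := ht
  obtain ⟨hx1, hx2⟩ := hx
  have ht0 : 0 < t := lt_of_lt_of_le (by positivity) ht1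
  unfold rhoB
  rw [if_neg ht0.ne', if_pos (by linarith : t ≤ 1), if_neg, if_pos]
  · rw [mem_Ioc]; constructor <;> linarith
  · rw [mem_Icc, not_and_or]; right; push_neg; linarith

lemma integrableOn_rhoB {T : ℝ} (hT : 0 < T) :
    IntegrableOn (Function.uncurry rhoB) (Icc (0:ℝ) T ×ˢ (univ : Set ℝ)) := by
  set M : ℝ := 2 * Real.sqrt T + T + 1 with hM
  set K : Set (ℝ × ℝ) := Icc (0:ℝ) T ×ˢ Icc (-1 : ℝ) M with hK
  have hKm : MeasurableSet K := (measurableSet_Icc).prod measurableSet_Icc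
  have hKfin : volume K < ⊤ := by
    rw [hK, Measure.volume_eq_prod, Measure.prod_prod, Real.volume_Icc, Real.volume_Icc]
    exact ENNReal.mul_lt_top ENNReal.ofReal_lt_top ENNReal.ofReal_lt_top
  have hg : Integrable (K.indicator fun _ => (1:ℝ)) := by
    rw [integrable_indicator_iff hKm]
    exact integrableOn_const hKfin.ne (by simp)
  apply Integrable.mono' hg.integrableOn
    (measurable_rhoB.aestronglyMeasurable.restrict)
  rw [ae_restrict_iff' ((measurableSet_Icc).prod MeasurableSet.univ)]
  filter_upwards with p hp
  obtain ⟨hp1, _⟩ := hp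
  by_cases hx : p.2 ∈ Icc (-1 : ℝ) M
  · have : p ∈ K := ⟨hp1, hx⟩
    rw [indicator_of_mem this]
    rw [Real.norm_eq_abs, Function.uncurry, abs_of_nonneg (rhoB_nonneg _ _)]
    exact rhoB_le_one _ _
  · rw [Function.uncurry, rhoB_support hT hp1 hx]
    simp [indicator_apply]
    split_ifs <;> norm_num

lemma integrableOn_rhoB_S {T : ℝ} (hT : 0 < T) :
    IntegrableOn (Function.uncurry rhoB) (Icc (0:ℝ) T ×ˢ Ioi (0:ℝ)) :=
  (integrableOn_rhoB hT).mono_set (prod_mono_right (subset_univ _))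

lemma rhoB_iterated_eq {T : ℝ} (hT : 0 < T) :
    (∫ t in Icc (0:ℝ) T, ∫ x in Ioi (0:ℝ), rhoB t x) =
      ∫ p in Icc (0:ℝ) T ×ˢ Ioi (0:ℝ), Function.uncurry rhoB p := by
  have h := integrableOn_rhoB_S hT
  rw [Measure.volume_eq_prod] at h
  have := MeasureTheory.setIntegral_prod (Function.uncurry rhoB) h
  rw [Measure.volume_eq_prod]
  exact this.symm

lemma rhoB_ofReal_eq {T : ℝ} (hT : 0 < T) :
    ENNReal.ofReal (∫ t in Icc (0:ℝ) T, ∫ x in Ioi (0:ℝ), rhoB t x) =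
      ∫⁻ p in Icc (0:ℝ) T ×ˢ Ioi (0:ℝ), ENNReal.ofReal (Function.uncurry rhoB p) := by
  rw [rhoB_iterated_eq hT]
  exact MeasureTheory.ofReal_integral_eq_lintegral_ofReal (integrableOn_rhoB_S hT)
    (ae_of_all _ fun p => rhoB_nonneg p.1 p.2)

lemma rhoB_lintegral_pos {T : ℝ} (hT : 0 < T) :
    0 < ∫⁻ p in Icc (0:ℝ) T ×ˢ Ioi (0:ℝ), ENNReal.ofReal (Function.uncurry rhoB p) := by
  set s : ℝ := min T 1 / 2 with hs
  have hs0 : 0 < s := by positivity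
  have hsT : s ≤ T := by
    rw [hs]; have := min_le_left T 1; linarith
  set R : Set (ℝ × ℝ) := Icc (s/2) s ×ˢ Ioc (0:ℝ) (s/2) with hR
  have hRmeas : MeasurableSet R := measurableSet_Icc.prod measurableSet_Ioc
  have hRS : R ⊆ Icc (0:ℝ) T ×ˢ Ioi (0:ℝ) :=
    prod_mono (Icc_subset_Icc (by positivity) hsT) (fun x hx => hx.1)
  calc (0:ENNReal) < ENNReal.ofReal (s - s/2) * ENNReal.ofReal (s/2 - 0) := by
        apply ENNReal.mul_pos
        · exact (ENNReal.ofReal_pos.2 (by linarith)).ne'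
        · exact (ENNReal.ofReal_pos.2 (by linarith)).ne'
    _ = volume R := by
        rw [hR, Measure.volume_eq_prod, Measure.prod_prod, Real.volume_Icc, Real.volume_Ioc]
    _ = ∫⁻ p in R, 1 := (setLIntegral_one R).symm
    _ = ∫⁻ p in R, ENNReal.ofReal (Function.uncurry rhoB p) := by
        apply (setLIntegral_congr_fun_ae hRmeas _).symm
        refine ae_of_all _ fun p hp => ?_
        rw [Function.uncurry, rhoB_eq_one hT hp.1 hp.2, ENNReal.ofReal_one]
    _ ≤ _ := lintegral_mono_set hRS

lemma rhoB_key {T : ℝ} (hT : 0 < T) (f : ℝ → ℝ → ℝ)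
    (hf0 : ∀ᵐ p ∂(volume.restrict (Icc (0:ℝ) T ×ˢ Ioi (0:ℝ))), Function.uncurry f p = 0) :
    ENNReal.ofReal (∫ t in Icc (0:ℝ) T, ∫ x in Ioi (0:ℝ), rhoB t x) ≤
      ∫⁻ p in Icc (0:ℝ) T ×ˢ (univ : Set ℝ),
        ENNReal.ofReal |Function.uncurry f p - Function.uncurry rhoB p| := by
  rw [rhoB_ofReal_eq hT]
  calc ∫⁻ p in Icc (0:ℝ) T ×ˢ Ioi (0:ℝ), ENNReal.ofReal (Function.uncurry rhoB p)
      = ∫⁻ p in Icc (0:ℝ) T ×ˢ Ioi (0:ℝ),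
          ENNReal.ofReal |Function.uncurry f p - Function.uncurry rhoB p| := by
        apply lintegral_congr_ae
        filter_upwards [hf0] with p hp
        rw [hp, zero_sub, abs_neg, Function.uncurry, abs_of_nonneg (rhoB_nonneg _ _)]
    _ ≤ _ := lintegral_mono_set (prod_mono_right (subset_univ _))

/-- Any measurable function vanishing a.e. on `[0,T]×(0,∞)` is at `L¹([0,T]×ℝ)` distance
at least `∫_0^T ∫_0^∞ ρ^(B) > 0` from `ρ^(B)`; in particular, no sequence of functions
vanishing a.e. on `[0,T]×(0,∞)` converges to `ρ^(B)` in `L¹([0,T]×ℝ)`. -/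
theorem rhoB_not_L1_limit_of_negatively_supported (T : ℝ) (hT : 0 < T) :
    (∀ f : ℝ → ℝ → ℝ, Measurable (Function.uncurry f) →
      (∀ᵐ p ∂(volume.restrict (Icc (0:ℝ) T ×ˢ Ioi (0:ℝ))), Function.uncurry f p = 0) →
      ENNReal.ofReal (∫ t in Icc (0:ℝ) T, ∫ x in Ioi (0:ℝ), rhoB t x) ≤
        ∫⁻ p in Icc (0:ℝ) T ×ˢ (univ : Set ℝ),
          ENNReal.ofReal |Function.uncurry f p - Function.uncurry rhoB p|) ∧
    (0 < ∫ t in Icc (0:ℝ) T, ∫ x in Ioi (0:ℝ), rhoB t x) ∧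
    (∀ f : ℕ → ℝ → ℝ → ℝ,
      (∀ n, IntegrableOn (Function.uncurry (f n)) (Icc (0:ℝ) T ×ˢ (univ : Set ℝ))) →
      (∀ n, ∀ᵐ p ∂(volume.restrict (Icc (0:ℝ) T ×ˢ Ioi (0:ℝ))),
        Function.uncurry (f n) p = 0) →
      ¬ Tendsto
          (fun n => ∫ p in Icc (0:ℝ) T ×ˢ (univ : Set ℝ),
            |Function.uncurry (f n) p - Function.uncurry rhoB p|)
          atTop (nhds 0)) := by
  have hc_pos : 0 < ∫ t in Icc (0:ℝ) T, ∫ x in Ioi (0:ℝ), rhoB t x := by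
    have h := rhoB_lintegral_pos hT
    rw [← rhoB_ofReal_eq hT] at h
    exact ENNReal.ofReal_pos.mp h
  refine ⟨fun f _ hf0 => rhoB_key hT f hf0, hc_pos, ?_⟩
  intro f hfint hf0 htend
  have hJ : ∀ n, (∫ t in Icc (0:ℝ) T, ∫ x in Ioi (0:ℝ), rhoB t x) ≤
      ∫ p in Icc (0:ℝ) T ×ˢ (univ : Set ℝ),
        |Function.uncurry (f n) p - Function.uncurry rhoB p| := by
    intro n
    have hint : IntegrableOn
        (fun p => |Function.uncurry (f n) p - Function.uncurry rhoB p|)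
        (Icc (0:ℝ) T ×ˢ (univ : Set ℝ)) :=
      ((hfint n).sub (integrableOn_rhoB hT)).abs
    have h1 := MeasureTheory.ofReal_integral_eq_lintegral_ofReal hint
      (ae_of_all _ fun p => abs_nonneg _)
    have h2 := rhoB_key hT (f n) (hf0 n)
    rw [← h1] at h2
    exact (ENNReal.ofReal_le_ofReal_iff (integral_nonneg fun p => abs_nonneg _)).mp h2
  have hev : ∀ᶠ n in atTop,
      (∫ p in Icc (0:ℝ) T ×ˢ (univ : Set ℝ),
        |Function.uncurry (f n) p - Function.uncurry rhoB p|) <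
        ∫ t in Icc (0:ℝ) T, ∫ x in Ioi (0:ℝ), rhoB t x :=
    htend.eventually_lt_const hc_pos
  obtain ⟨n, hn⟩ := hev.exists
  exact absurd (hJ n) (not_le.2 hn)
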